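/- Let m ≥ 1, t₀ ∈ ℝ, and let K, S : [t₀,∞) → M_m(ℝ) be matrix-valued functions such that K(t) is skew-symmetric and S(t) is symmetric for every t ≥ t₀. Then there exists a regular on [t₀,∞) matrix L(t) of class C¹ satisfying L̇(t)·L(t)ᵀ = K(t) + S(t) for all t ≥ t₀ if and only if K and S are continuous on [t₀,∞) and there exist constants μ > 0, η > 0 and a symmetric positive definite matrix S₀ ∈ M_m(ℝ) such that |2∫_{t₀}^t tr(S(ν)) dν + tr(S₀)| ≤ μ² and det(2∫_{t₀}^t S(ν) dν + S₀) ≥ η² for all t ≥ t₀. -/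

import Mathlib

open Matrix Set intervalIntegral
open Function

attribute [local instance] Matrix.frobeniusNormedAddCommGroup Matrix.frobeniusNormedSpace

open Set intervalIntegral Function

section LinearODE

variable {E : Type*} [NormedAddCommGroup E] [NormedSpace ℝ E] [CompleteSpace E]

theorem linear_ode_Icc (g : ℝ → E →L[ℝ] E) (hg : Continuous g) {a b : ℝ} (hab : a ≤ b) (x₀ : E) :
    (∃ u : ℝ → E, u a = x₀ ∧ ∀ t ∈ Icc a b, HasDerivWithinAt u (g t (u t)) (Icc a b) t) ∧
    (∀ u v : ℝ → E, (∀ t ∈ Icc a b, HasDerivWithinAt u (g t (u t)) (Icc a b) t) →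
      (∀ t ∈ Icc a b, HasDerivWithinAt v (g t (v t)) (Icc a b) t) → u a = x₀ → v a = x₀ →
      ∀ t ∈ Icc a b, u t = v t) := by
  haveI : Nonempty (Icc a b) := Set.Nonempty.to_subtype (nonempty_Icc.mpr hab)
  obtain ⟨C₀, hC₀⟩ : ∃ C, ∀ s ∈ Icc a b, ‖g s‖ ≤ C :=
    isCompact_Icc.exists_bound_of_continuousOn hg.continuousOn
  set C : ℝ := max C₀ 0 with hCdef
  have hC : ∀ s ∈ Icc a b, ‖g s‖ ≤ C := fun s hs => (hC₀ s hs).trans (le_max_left _ _)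
  have hC0 : (0:ℝ) ≤ C := le_max_right _ _
  set ext : C(Icc a b, E) → ℝ → E := fun u s => u (projIcc a b hab s) with hext
  have extCont : ∀ u : C(Icc a b, E), Continuous (ext u) := fun u =>
    u.continuous.comp continuous_projIcc
  have extEq : ∀ (u : C(Icc a b, E)) (s : ℝ) (hs : s ∈ Icc a b), ext u s = u ⟨s, hs⟩ := by
    intro u s hs
    simp [hext, projIcc_of_mem hab hs]
  set F : C(Icc a b, E) → ℝ → E := fun u t => x₀ + ∫ s in a..t, g s (ext u s) with hF
  have integrandCont : ∀ u : C(Icc a b, E), Continuous fun s => g s (ext u s) :=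
    fun u => hg.clm_apply (extCont u)
  have hFderiv : ∀ (u : C(Icc a b, E)) (t : ℝ), HasDerivAt (F u) (g t (ext u t)) t := by
    intro u t
    exact (((integrandCont u).integral_hasStrictDerivAt a t).hasDerivAt.const_add x₀)
  have hFcont : ∀ u : C(Icc a b, E), Continuous (F u) := fun u =>
    continuous_iff_continuousAt.2 fun t => (hFderiv u t).continuousAt
  set Φ : C(Icc a b, E) → C(Icc a b, E) :=
    fun u => ⟨fun t => F u t, (hFcont u).comp continuous_subtype_val⟩ with hΦ
  have Φapp : ∀ (u : C(Icc a b, E)) (t : Icc a b), Φ u t = F u t := fun u t => rfl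
  -- one-step estimate
  have step : ∀ (u v : C(Icc a b, E)) (D : ℝ), 0 ≤ D → ∀ n : ℕ,
      (∀ s : Icc a b, ‖u s - v s‖ ≤ D * ((s:ℝ) - a) ^ n / n.factorial) →
      ∀ t ∈ Icc a b, ‖F u t - F v t‖ ≤ C * D * (t - a) ^ (n + 1) / (n + 1).factorial := by
    intro u v D hD n hInd t ht
    have hat : a ≤ t := ht.1
    have h1 : F u t - F v t = ∫ s in a..t, (g s (ext u s) - g s (ext v s)) := by
      rw [intervalIntegral.integral_sub ((integrandCont u).intervalIntegrable _ _)
        ((integrandCont v).intervalIntegrable _ _)]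
      simp [hF]
    have h2 : ∀ s ∈ Icc a t, ‖g s (ext u s) - g s (ext v s)‖ ≤
        C * (D * (s - a) ^ n / n.factorial) := by
      intro s hs
      have hs' : s ∈ Icc a b := ⟨hs.1, hs.2.trans ht.2⟩
      have := hInd ⟨s, hs'⟩
      calc ‖g s (ext u s) - g s (ext v s)‖ = ‖g s (ext u s - ext v s)‖ := by rw [map_sub]
        _ ≤ ‖g s‖ * ‖ext u s - ext v s‖ := (g s).le_opNorm _
        _ ≤ C * (D * (s - a) ^ n / n.factorial) := by
            apply mul_le_mul (hC s hs') ?_ (norm_nonneg _) hC0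
            rw [extEq u s hs', extEq v s hs']
            exact this
    calc ‖F u t - F v t‖ = ‖∫ s in a..t, (g s (ext u s) - g s (ext v s))‖ := by rw [h1]
      _ ≤ ∫ s in a..t, ‖g s (ext u s) - g s (ext v s)‖ :=
          intervalIntegral.norm_integral_le_integral_norm hat
      _ ≤ ∫ s in a..t, C * (D * (s - a) ^ n / n.factorial) := by
          apply intervalIntegral.integral_mono_on hat
          · exact (((integrandCont u).sub (integrandCont v)).norm).intervalIntegrable _ _
          · exact (Continuous.intervalIntegrable (by fun_prop) _ _)
          · exact h2
      _ = (C * D / n.factorial) * ∫ s in a..t, (s - a) ^ n := by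
          rw [← intervalIntegral.integral_const_mul]
          apply intervalIntegral.integral_congr
          intro s _
          ring
      _ = (C * D / n.factorial) * (((t - a) ^ (n + 1) - (a - a) ^ (n + 1)) / (n + 1)) := by
          rw [intervalIntegral.integral_comp_sub_right (fun x => x ^ n) a, integral_pow]
      _ = C * D * (t - a) ^ (n + 1) / (n + 1).factorial := by
          have hfac : (n.factorial : ℝ) ≠ 0 := by positivity
          have h3 : (((n+1).factorial : ℕ) : ℝ) = ((n:ℝ)+1) * n.factorial := by
            rw [Nat.factorial_succ]; push_cast; ring
          rw [sub_self, zero_pow (Nat.succ_ne_zero n), h3, sub_zero, div_mul_div_comm,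
            mul_comm ((n:ℝ)+1) (n.factorial:ℝ)]
  -- iterated estimate
  have iter : ∀ (n : ℕ) (u v : C(Icc a b, E)) (t : Icc a b),
      ‖(Φ^[n] u) t - (Φ^[n] v) t‖ ≤ dist u v * C ^ n * ((t:ℝ) - a) ^ n / n.factorial := by
    intro n
    induction n with
    | zero =>
      intro u v t
      simpa [dist_eq_norm] using ContinuousMap.dist_apply_le_dist (f := u) (g := v) t
    | succ n ih =>
      intro u v t
      have key := step (Φ^[n] u) (Φ^[n] v) (dist u v * C ^ n)
        (mul_nonneg dist_nonneg (pow_nonneg hC0 n)) n ?_ t t.2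
      · rw [iterate_succ_apply', iterate_succ_apply', Φapp, Φapp]
        calc ‖F (Φ^[n] u) t - F (Φ^[n] v) t‖
            ≤ C * (dist u v * C ^ n) * ((t:ℝ) - a) ^ (n + 1) / (n + 1).factorial := key
          _ = dist u v * C ^ (n + 1) * ((t:ℝ) - a) ^ (n + 1) / (n + 1).factorial := by ring
      · intro s
        have := ih u v s
        calc ‖(Φ^[n] u) s - (Φ^[n] v) s‖ ≤ dist u v * C ^ n * ((s:ℝ) - a) ^ n / n.factorial := this
          _ = dist u v * C ^ n * ((s:ℝ) - a) ^ n / n.factorial := rfl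
  -- Lipschitz bound for iterates
  have lipIter : ∀ (n : ℕ) (u v : C(Icc a b, E)),
      dist (Φ^[n] u) (Φ^[n] v) ≤ C ^ n * (b - a) ^ n / n.factorial * dist u v := by
    intro n u v
    rw [ContinuousMap.dist_le_iff_of_nonempty]
    intro t
    rw [dist_eq_norm]
    calc ‖(Φ^[n] u) t - (Φ^[n] v) t‖ ≤ dist u v * C ^ n * ((t:ℝ) - a) ^ n / n.factorial :=
        iter n u v t
      _ ≤ dist u v * C ^ n * (b - a) ^ n / n.factorial := by
          have h1 : ((t:ℝ) - a) ^ n ≤ (b - a) ^ n :=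
            pow_le_pow_left₀ (sub_nonneg.mpr t.2.1) (sub_le_sub_right t.2.2 a) n
          have h2 : (0:ℝ) ≤ dist u v * C ^ n := mul_nonneg dist_nonneg (pow_nonneg hC0 n)
          apply div_le_div_of_nonneg_right ?hx ?hc |>.trans_eq rfl
          case hx => exact mul_le_mul_of_nonneg_left h1 h2
          case hc => positivity
      _ = C ^ n * (b - a) ^ n / n.factorial * dist u v := by ring
  -- choose a contracting iterate
  obtain ⟨n, hn⟩ : ∃ n : ℕ, C ^ n * (b - a) ^ n / n.factorial < 1 := by
    have h := FloorSemiring.tendsto_pow_div_factorial_atTop (K := ℝ) (C * (b - a))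
    have h2 := h.eventually (gt_mem_nhds one_pos)
    obtain ⟨n, hn⟩ := h2.exists
    exact ⟨n, by rw [← mul_pow]; exact hn⟩
  have hq0 : (0:ℝ) ≤ C ^ n * (b - a) ^ n / n.factorial := by
    have : (0:ℝ) ≤ b - a := sub_nonneg.mpr hab
    positivity
  set q : NNReal := ⟨C ^ n * (b - a) ^ n / n.factorial, hq0⟩ with hqdef
  have hcontr : ContractingWith q (Φ^[n]) := by
    constructor
    · exact_mod_cast hn
    · apply LipschitzWith.of_dist_le_mul
      intro u v
      exact lipIter n u v
  set ustar : C(Icc a b, E) := ContractingWith.fixedPoint (Φ^[n]) hcontr with hustar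
  have hfixn : Φ^[n] ustar = ustar := hcontr.fixedPoint_isFixedPt
  have hfix : Φ ustar = ustar := by
    have h1 : Function.IsFixedPt (Φ^[n]) (Φ ustar) := by
      show Φ^[n] (Φ ustar) = Φ ustar
      rw [← iterate_succ_apply, iterate_succ_apply', hfixn]
    exact hcontr.fixedPoint_unique h1
  -- solutions satisfy the integral equation
  have keyFF : ∀ w : ℝ → E, (∀ t ∈ Icc a b, HasDerivWithinAt w (g t (w t)) (Icc a b) t) →
      ∀ t ∈ Icc a b, w t = w a + ∫ s in a..t, g s (w s) := by
    intro w hw t ht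
    have hcw : ContinuousOn w (Icc a b) := fun s hs => (hw s hs).continuousWithinAt
    have hft : (∫ s in a..t, g s (w s)) = w t - w a := by
      apply intervalIntegral.integral_eq_sub_of_hasDeriv_right_of_le ht.1
      · exact hcw.mono (Icc_subset_Icc le_rfl ht.2)
      · intro x hx
        have hxb : x < b := lt_of_lt_of_le hx.2 ht.2
        refine (hw x ⟨le_of_lt hx.1, le_of_lt hxb⟩).mono_of_mem_nhdsWithin ?_
        refine mem_nhdsWithin.mpr ⟨Iio b, isOpen_Iio, hxb, ?_⟩
        rintro y ⟨hy1, hy2⟩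
        exact ⟨le_of_lt (lt_trans hx.1 hy2), le_of_lt hy1⟩
      · apply ContinuousOn.intervalIntegrable
        rw [uIcc_of_le ht.1]
        exact hg.continuousOn.clm_apply (hcw.mono (Icc_subset_Icc le_rfl ht.2))
    rw [hft]
    abel
  -- restrictions of solutions are fixed points of Φ
  have restrFix : ∀ w : ℝ → E, (∀ t ∈ Icc a b, HasDerivWithinAt w (g t (w t)) (Icc a b) t) →
      w a = x₀ → ∀ t : Icc a b, w t = ustar t := by
    intro w hw hwa
    have hcw : ContinuousOn w (Icc a b) := fun s hs => (hw s hs).continuousWithinAt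
    set r : C(Icc a b, E) := ⟨fun σ => w σ, continuousOn_iff_continuous_restrict.mp hcw⟩ with hr
    have hΦr : Φ r = r := by
      apply ContinuousMap.ext
      intro σ
      have hσ : (σ:ℝ) ∈ Icc a b := σ.2
      have hcongr : (∫ s in a..(σ:ℝ), g s (ext r s)) = ∫ s in a..(σ:ℝ), g s (w s) := by
        apply intervalIntegral.integral_congr
        intro s hs
        rw [uIcc_of_le hσ.1] at hs
        have hs' : s ∈ Icc a b := ⟨hs.1, hs.2.trans hσ.2⟩
        show g s (ext r s) = g s (w s)
        rw [extEq r s hs']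
        rfl
      show F r (σ:ℝ) = r σ
      show x₀ + (∫ s in a..(σ:ℝ), g s (ext r s)) = w σ
      rw [hcongr, ← hwa]
      exact (keyFF w hw σ hσ).symm
    have : r = ustar := hcontr.fixedPoint_unique (Function.IsFixedPt.iterate hΦr n)
    intro t
    rw [← this]
    rfl
  constructor
  · -- existence
    refine ⟨F ustar, ?_, ?_⟩
    · show x₀ + (∫ s in a..a, g s (ext ustar s)) = x₀
      rw [intervalIntegral.integral_same, add_zero]
    · intro t ht
      have h1 : ext ustar t = F ustar t := by
        calc ext ustar t = ustar ⟨t, ht⟩ := extEq ustar t ht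
          _ = (Φ ustar) ⟨t, ht⟩ := by rw [hfix]
          _ = F ustar t := rfl
      have := (hFderiv ustar t).hasDerivWithinAt (s := Icc a b)
      rwa [h1] at this
  · -- uniqueness
    intro u v hu hv hua hva t ht
    have h1 := restrFix u hu hua ⟨t, ht⟩
    have h2 := restrFix v hv hva ⟨t, ht⟩
    rw [h1, h2]

theorem linear_ode_unique_Ici (g : ℝ → E →L[ℝ] E) (hg : Continuous g) (t₀ : ℝ)
    {u v : ℝ → E}
    (hu : ∀ t ∈ Ici t₀, HasDerivWithinAt u (g t (u t)) (Ici t₀) t)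
    (hv : ∀ t ∈ Ici t₀, HasDerivWithinAt v (g t (v t)) (Ici t₀) t)
    (h0 : u t₀ = v t₀) : ∀ t ∈ Ici t₀, u t = v t := by
  intro t ht
  have hab : t₀ ≤ t := ht
  refine (linear_ode_Icc g hg hab (u t₀)).2 u v ?_ ?_ rfl h0.symm t ⟨hab, le_refl t⟩
  · intro s hs
    exact (hu s hs.1).mono Icc_subset_Ici_self
  · intro s hs
    exact (hv s hs.1).mono Icc_subset_Ici_self
theorem linear_ode_exists_Ici (g : ℝ → E →L[ℝ] E) (hg : Continuous g) (t₀ : ℝ) (x₀ : E) :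
    ∃ u : ℝ → E, u t₀ = x₀ ∧ ∀ t ∈ Ici t₀, HasDerivWithinAt u (g t (u t)) (Ici t₀) t := by
  have exU : ∀ b : ℝ, ∃ u : ℝ → E, u t₀ = x₀ ∧
      ∀ t ∈ Icc t₀ (max b t₀ + 1), HasDerivWithinAt u (g t (u t)) (Icc t₀ (max b t₀ + 1)) t := by
    intro b
    have hb : t₀ ≤ max b t₀ + 1 := le_trans (le_max_right b t₀) (le_of_lt (lt_add_one _))
    exact (linear_ode_Icc g hg hb x₀).1
  choose sol hsol0 hsolD using exU
  -- consistency of the chosen solutions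
  have consist : ∀ b c t : ℝ, t ∈ Icc t₀ (max b t₀ + 1) → t ∈ Icc t₀ (max c t₀ + 1) →
      sol b t = sol c t := by
    intro b c t htb htc
    rcases le_total (max b t₀ + 1) (max c t₀ + 1) with h | h
    · have hb : t₀ ≤ max b t₀ + 1 := le_trans (le_max_right b t₀) (le_of_lt (lt_add_one _))
      refine (linear_ode_Icc g hg hb x₀).2 (sol b) (sol c) (hsolD b) ?_ (hsol0 b) (hsol0 c) t htb
      intro s hs
      exact (hsolD c s ⟨hs.1, hs.2.trans h⟩).mono (Icc_subset_Icc le_rfl h)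
    · have hc : t₀ ≤ max c t₀ + 1 := le_trans (le_max_right c t₀) (le_of_lt (lt_add_one _))
      refine ((linear_ode_Icc g hg hc x₀).2 (sol c) (sol b) (hsolD c) ?_ (hsol0 c) (hsol0 b)
        t htc).symm
      intro s hs
      exact (hsolD b s ⟨hs.1, hs.2.trans h⟩).mono (Icc_subset_Icc le_rfl h)
  refine ⟨fun t => sol t t, hsol0 t₀, ?_⟩
  intro t ht
  have htt : t ∈ Icc t₀ (max t t₀ + 1) :=
    ⟨ht, le_trans (le_max_left t t₀) (le_of_lt (lt_add_one _))⟩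
  have hD := hsolD t t htt
  have hmem : Icc t₀ (max t t₀ + 1) ∈ nhdsWithin t (Ici t₀) := by
    refine mem_nhdsWithin.mpr ⟨Iio (max t t₀ + 1), isOpen_Iio, ?_, ?_⟩
    · exact lt_of_le_of_lt (le_max_left t t₀) (lt_add_one _)
    · rintro y ⟨hy1, hy2⟩
      exact ⟨hy2, le_of_lt hy1⟩
  have heq : ∀ s ∈ Icc t₀ (max t t₀ + 1), sol s s = sol t s := by
    intro s hs
    exact consist s t s ⟨hs.1, le_trans (le_max_left s t₀) (le_of_lt (lt_add_one _))⟩ hs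
  have h1 : HasDerivWithinAt (sol t) (g t (sol t t)) (Ici t₀) t :=
    hD.mono_of_mem_nhdsWithin hmem
  refine h1.congr_of_eventuallyEq ?_ (heq t htt)
  filter_upwards [hmem] with s hs
  exact heq s hs

end LinearODE



namespace Stmt0Aux

variable {m : ℕ}

/-- trace as a CLM (frobenius norm). -/
noncomputable def traceCLM (m : ℕ) : Matrix (Fin m) (Fin m) ℝ →L[ℝ] ℝ :=
  LinearMap.toContinuousLinearMap (Matrix.traceLinearMap (Fin m) ℝ ℝ)

@[simp] lemma traceCLM_apply (A : Matrix (Fin m) (Fin m) ℝ) : traceCLM m A = A.trace := rfl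

/-- transpose as a CLM (frobenius norm). -/
noncomputable def transposeCLM (m : ℕ) :
    Matrix (Fin m) (Fin m) ℝ →L[ℝ] Matrix (Fin m) (Fin m) ℝ :=
  LinearMap.toContinuousLinearMap
    { toFun := fun A => Aᵀ
      map_add' := fun A B => Matrix.transpose_add A B
      map_smul' := fun c A => Matrix.transpose_smul c A }

@[simp] lemma transposeCLM_apply (A : Matrix (Fin m) (Fin m) ℝ) : transposeCLM m A = Aᵀ := rfl

/-- left multiplication as a CLM. -/
noncomputable def mulLeftCLM (A : Matrix (Fin m) (Fin m) ℝ) :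
    Matrix (Fin m) (Fin m) ℝ →L[ℝ] Matrix (Fin m) (Fin m) ℝ :=
  LinearMap.toContinuousLinearMap (LinearMap.mulLeft ℝ A)

@[simp] lemma mulLeftCLM_apply (A B : Matrix (Fin m) (Fin m) ℝ) : mulLeftCLM A B = A * B := rfl

/-- right multiplication as a CLM. -/
noncomputable def mulRightCLM (A : Matrix (Fin m) (Fin m) ℝ) :
    Matrix (Fin m) (Fin m) ℝ →L[ℝ] Matrix (Fin m) (Fin m) ℝ :=
  LinearMap.toContinuousLinearMap (LinearMap.mulRight ℝ A)

@[simp] lemma mulRightCLM_apply (A B : Matrix (Fin m) (Fin m) ℝ) : mulRightCLM A B = B * A := rfl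

lemma continuous_mulLeftCLM : Continuous fun A : Matrix (Fin m) (Fin m) ℝ => mulLeftCLM A := by
  have : IsLinearMap ℝ fun A : Matrix (Fin m) (Fin m) ℝ => mulLeftCLM A := by
    constructor
    · intro A B
      apply ContinuousLinearMap.ext
      intro X
      simp [add_mul]
    · intro c A
      apply ContinuousLinearMap.ext
      intro X
      simp [Matrix.smul_mul]
  exact LinearMap.continuous_of_finiteDimensional this.mk'

lemma continuous_mulRightCLM : Continuous fun A : Matrix (Fin m) (Fin m) ℝ => mulRightCLM A := by
  have : IsLinearMap ℝ fun A : Matrix (Fin m) (Fin m) ℝ => mulRightCLM A := by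
    constructor
    · intro A B
      apply ContinuousLinearMap.ext
      intro X
      simp [mul_add]
    · intro c A
      apply ContinuousLinearMap.ext
      intro X
      simp [Matrix.mul_smul]
  exact LinearMap.continuous_of_finiteDimensional this.mk'

lemma norm_sq_eq_trace (A : Matrix (Fin m) (Fin m) ℝ) : ‖A‖ ^ 2 = (A * Aᵀ).trace := by
  have h0 : (0:ℝ) ≤ ∑ i, ∑ j, ‖A i j‖ ^ (2:ℝ) := by
    apply Finset.sum_nonneg
    intro i _
    apply Finset.sum_nonneg
    intro j _
    positivity
  have h1 : ‖A‖ ^ 2 = ∑ i, ∑ j, ‖A i j‖ ^ (2:ℝ) := by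
    rw [Matrix.frobenius_norm_def A]
    rw [← Real.rpow_natCast ((∑ i, ∑ j, ‖A i j‖ ^ (2:ℝ)) ^ ((1:ℝ)/2)) 2, ← Real.rpow_mul h0]
    norm_num
  rw [h1, Matrix.trace]
  apply Finset.sum_congr rfl
  intro i _
  simp only [Matrix.diag_apply, Matrix.mul_apply, Matrix.transpose_apply]
  apply Finset.sum_congr rfl
  intro j _
  rw [Real.norm_eq_abs, Real.rpow_two, sq_abs, sq]

lemma abs_entry_le_norm (A : Matrix (Fin m) (Fin m) ℝ) (i j : Fin m) : |A i j| ≤ ‖A‖ := by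
  have h1 : |A i j| ^ 2 ≤ ‖A‖ ^ 2 := by
    rw [norm_sq_eq_trace]
    have : (A * Aᵀ).trace = ∑ i, ∑ j, A i j ^ 2 := by
      rw [Matrix.trace]
      apply Finset.sum_congr rfl
      intro i _
      simp only [Matrix.diag_apply, Matrix.mul_apply, Matrix.transpose_apply, sq]
    rw [this, sq_abs]
    calc A i j ^ 2 ≤ ∑ j', A i j' ^ 2 := by
          apply Finset.single_le_sum (f := fun j' => A i j' ^ 2) ?_ (Finset.mem_univ j)
          intro k _
          positivity
      _ ≤ ∑ i', ∑ j', A i' j' ^ 2 := by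
          apply Finset.single_le_sum (f := fun i' => ∑ j', A i' j' ^ 2) ?_ (Finset.mem_univ i)
          intro k _
          apply Finset.sum_nonneg
          intro l _
          positivity
  nlinarith [abs_nonneg (A i j), norm_nonneg A]
lemma posDef_of_posSemidef_det_ne_zero {A : Matrix (Fin m) (Fin m) ℝ} (h : A.PosSemidef)
    (hdet : A.det ≠ 0) : A.PosDef := by
  exact h.posDef_iff_det_ne_zero.mpr hdet

lemma abs_dotProduct_mulVec_le (M : Matrix (Fin m) (Fin m) ℝ) (x : Fin m → ℝ)
    (hx : ∀ i, |x i| ≤ 1) : |x ⬝ᵥ M *ᵥ x| ≤ (m:ℝ)^2 * ‖M‖ := by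
  have hexp : x ⬝ᵥ M *ᵥ x = ∑ i, ∑ j, x i * (M i j * x j) := by
    simp [dotProduct, Matrix.mulVec, Finset.mul_sum]
  rw [hexp]
  calc |∑ i, ∑ j, x i * (M i j * x j)| ≤ ∑ i, ∑ j, |x i * (M i j * x j)| := by
        refine (Finset.abs_sum_le_sum_abs _ _).trans ?_
        apply Finset.sum_le_sum
        intro i _
        exact Finset.abs_sum_le_sum_abs _ _
    _ ≤ ∑ _i : Fin m, ∑ _j : Fin m, ‖M‖ := by
        apply Finset.sum_le_sum
        intro i _
        apply Finset.sum_le_sum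
        intro j _
        rw [abs_mul, abs_mul]
        have h1 := hx i
        have h2 := hx j
        have h3 := abs_entry_le_norm M i j
        have h6 := abs_nonneg (x j)
        have hstep : |x i| * (|M i j| * |x j|) ≤ 1 * (‖M‖ * 1) := by
          apply mul_le_mul h1 ?_ (by positivity) zero_le_one
          apply mul_le_mul h3 h2 h6 (norm_nonneg M)
        simpa using hstep
    _ = (m:ℝ)^2 * ‖M‖ := by
        simp [Finset.sum_const]
        ring

lemma posDef_nhds (hm : 1 ≤ m) {Q : Matrix (Fin m) (Fin m) ℝ} (hQ : Q.PosDef) :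
    ∃ ε > 0, ∀ R : Matrix (Fin m) (Fin m) ℝ, Rᵀ = R → ‖R - Q‖ < ε → R.PosDef := by
  haveI : Nonempty (Fin m) := ⟨⟨0, hm⟩⟩
  have hKc : IsCompact (Metric.sphere (0 : Fin m → ℝ) 1) := isCompact_sphere 0 1
  have hKne : (Metric.sphere (0 : Fin m → ℝ) 1).Nonempty :=
    NormedSpace.sphere_nonempty.mpr zero_le_one
  have hfc : Continuous fun x : Fin m → ℝ => x ⬝ᵥ Q *ᵥ x :=
    (continuous_id.dotProduct ((continuous_const (y := Q)).matrix_mulVec continuous_id))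
  obtain ⟨x₀, hx₀K, hx₀min'⟩ := hKc.exists_isMinOn hKne hfc.continuousOn
  have hx₀min : ∀ y ∈ Metric.sphere (0 : Fin m → ℝ) 1, x₀ ⬝ᵥ Q *ᵥ x₀ ≤ y ⬝ᵥ Q *ᵥ y :=
    fun y hy => hx₀min' hy
  set c : ℝ := x₀ ⬝ᵥ Q *ᵥ x₀ with hc
  have hx₀ne : x₀ ≠ 0 := by
    intro h
    have := Metric.mem_sphere.mp hx₀K
    rw [h] at this
    simp at this
  have hcpos : 0 < c := by
    have := hQ.dotProduct_mulVec_pos hx₀ne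
    rwa [star_trivial] at this
  refine ⟨c / ((m:ℝ)^2 + 1), by positivity, ?_⟩
  intro R hRsym hRclose
  refine Matrix.PosDef.of_dotProduct_mulVec_pos ?_ ?_
  · rw [Matrix.IsHermitian, Matrix.conjTranspose_eq_transpose_of_trivial]
    exact hRsym
  · intro x hx
    rw [star_trivial]
    have hr : 0 < ‖x‖ := norm_pos_iff.mpr hx
    set y : Fin m → ℝ := ‖x‖⁻¹ • x with hy
    have hyn : ‖y‖ = 1 := by
      rw [hy, norm_smul, norm_inv, norm_norm, inv_mul_cancel₀ (ne_of_gt hr)]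
    have hyK : y ∈ Metric.sphere (0 : Fin m → ℝ) 1 := by
      simpa using hyn
    have hyi : ∀ i, |y i| ≤ 1 := by
      intro i
      have := norm_le_pi_norm y i
      rwa [Real.norm_eq_abs, hyn] at this
    have hQy : c ≤ y ⬝ᵥ Q *ᵥ y := hx₀min y hyK
    have hdiff : |y ⬝ᵥ (R - Q) *ᵥ y| ≤ (m:ℝ)^2 * ‖R - Q‖ := abs_dotProduct_mulVec_le _ y hyi
    have hsplit : y ⬝ᵥ R *ᵥ y = y ⬝ᵥ Q *ᵥ y + y ⬝ᵥ (R - Q) *ᵥ y := by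
      rw [Matrix.sub_mulVec, dotProduct_sub]
      ring
    have hypos : 0 < y ⬝ᵥ R *ᵥ y := by
      have hm2 : (m:ℝ)^2 * ‖R - Q‖ < c := by
        have h1 : (m:ℝ)^2 * ‖R - Q‖ ≤ ((m:ℝ)^2 + 1) * ‖R - Q‖ := by
          have := norm_nonneg (R - Q)
          nlinarith
        have h2 : ((m:ℝ)^2 + 1) * ‖R - Q‖ < ((m:ℝ)^2 + 1) * (c / ((m:ℝ)^2 + 1)) := by
          apply mul_lt_mul_of_pos_left hRclose
          positivity
        have h3 : ((m:ℝ)^2 + 1) * (c / ((m:ℝ)^2 + 1)) = c := by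
          field_simp
        linarith
      have := abs_le.mp hdiff
      rw [hsplit]
      linarith
    have hxy : x = ‖x‖ • y := by
      rw [hy, smul_smul, mul_inv_cancel₀ (ne_of_gt hr), one_smul]
    have hfinal : x ⬝ᵥ R *ᵥ x = ‖x‖ * (‖x‖ * (y ⬝ᵥ R *ᵥ y)) := by
      conv_lhs => rw [hxy]
      rw [Matrix.mulVec_smul, smul_dotProduct, dotProduct_smul, smul_eq_mul, smul_eq_mul]
    rw [hfinal]
    exact mul_pos hr (mul_pos hr hypos)

lemma isClosed_posSemidef : IsClosed {M : Matrix (Fin m) (Fin m) ℝ | M.PosSemidef} := by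
  have heq : {M : Matrix (Fin m) (Fin m) ℝ | M.PosSemidef} =
      {M : Matrix (Fin m) (Fin m) ℝ | Mᴴ = M} ∩
        ⋂ x : Fin m → ℝ, {M : Matrix (Fin m) (Fin m) ℝ | 0 ≤ star x ⬝ᵥ M *ᵥ x} := by
    ext M
    simp only [Set.mem_setOf_eq, Set.mem_inter_iff, Set.mem_iInter]
    exact Matrix.posSemidef_iff_dotProduct_mulVec
  rw [heq]
  apply IsClosed.inter
  · exact isClosed_eq (continuous_id.matrix_conjTranspose) continuous_id
  · apply isClosed_iInter
    intro x
    apply isClosed_le continuous_const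
    exact (continuous_const (y := star x)).dotProduct
      (continuous_id.matrix_mulVec continuous_const)

lemma posDef_on_Ici (hm : 1 ≤ m) {t₀ : ℝ} {P : ℝ → Matrix (Fin m) (Fin m) ℝ}
    (hcont : ContinuousOn P (Ici t₀)) (h0 : (P t₀).PosDef)
    (hdet : ∀ t ∈ Ici t₀, (P t).det ≠ 0) (hsymm : ∀ t ∈ Ici t₀, (P t)ᵀ = P t) :
    ∀ t ∈ Ici t₀, (P t).PosDef := by
  haveI : PreconnectedSpace (Ici t₀) := Subtype.preconnectedSpace isPreconnected_Ici
  set Q : Ici t₀ → Matrix (Fin m) (Fin m) ℝ := fun x => P x with hQdef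
  have hQcont : Continuous Q := continuousOn_iff_continuous_restrict.mp hcont
  set A : Set (Ici t₀) := {x | (Q x).PosDef} with hA
  have hAeq : A = Q ⁻¹' {M | M.PosSemidef} := by
    ext x
    constructor
    · exact fun h => Matrix.PosDef.posSemidef h
    · intro h
      exact posDef_of_posSemidef_det_ne_zero h (hdet x x.2)
  have hclosed : IsClosed A := by
    rw [hAeq]
    exact isClosed_posSemidef.preimage hQcont
  have hopen : IsOpen A := by
    rw [isOpen_iff_mem_nhds]
    intro x hx
    obtain ⟨ε, hε, hball⟩ := posDef_nhds hm hx
    have hev : ∀ᶠ y in nhds x, ‖Q y - Q x‖ < ε := by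
      have := (hQcont.tendsto x).eventually (Metric.ball_mem_nhds (Q x) hε)
      filter_upwards [this] with y hy
      rwa [dist_eq_norm] at hy
    filter_upwards [hev] with y hy
    exact hball (Q y) (hsymm y y.2) hy
  have hAuniv : A = Set.univ := by
    apply IsClopen.eq_univ ⟨hclosed, hopen⟩
    exact ⟨⟨t₀, self_mem_Ici⟩, h0⟩
  intro t ht
  have : (⟨t, ht⟩ : Ici t₀) ∈ A := hAuniv ▸ Set.mem_univ _
  exact this

open scoped MatrixOrder in
lemma exists_symm_sqrt {S₀ : Matrix (Fin m) (Fin m) ℝ} (h : S₀.PosSemidef) :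
    ∃ B : Matrix (Fin m) (Fin m) ℝ, Bᵀ = B ∧ B * B = S₀ := by
  refine ⟨CFC.sqrt S₀, ?_, CFC.sqrt_mul_sqrt_self S₀ h.nonneg⟩
  rw [← Matrix.conjTranspose_eq_transpose_of_trivial]
  exact (CFC.sqrt_nonneg S₀).posSemidef.1

end Stmt0Aux

/-- For `K` skew-symmetric valued and `S` symmetric valued on `[t₀,∞)`,
there is a regular on `[t₀,∞)` matrix `L(t)` of class `C¹` with `L̇(t)·L(t)ᵀ = K(t) + S(t)`
iff `K, S` are continuous and there are `μ, η > 0` and a symmetric positive definite `S₀`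
with `|2∫_{t₀}^t tr(S) + tr(S₀)| ≤ μ²` and `det(2∫_{t₀}^t S + S₀) ≥ η²` for all `t ≥ t₀`.
(The norm on matrices is the Frobenius norm.) -/
theorem stmt_0 {m : ℕ} (hm : 1 ≤ m) (t₀ : ℝ) (K S : ℝ → Matrix (Fin m) (Fin m) ℝ)
    (hK : ∀ t ∈ Ici t₀, (K t)ᵀ = -K t)
    (hS : ∀ t ∈ Ici t₀, (S t)ᵀ = S t) :
    (∃ L : ℝ → Matrix (Fin m) (Fin m) ℝ,
        ContDiffOn ℝ 1 L (Ici t₀) ∧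
        (∃ M : ℝ, ∀ t ∈ Ici t₀, ‖L t‖ ≤ M) ∧
        (∃ η > 0, ∀ t ∈ Ici t₀, η ≤ |(L t).det|) ∧
        (∀ t ∈ Ici t₀, derivWithin L (Ici t₀) t * (L t)ᵀ = K t + S t)) ↔
      (ContinuousOn K (Ici t₀) ∧ ContinuousOn S (Ici t₀) ∧
        ∃ μ > (0:ℝ), ∃ η > (0:ℝ), ∃ S₀ : Matrix (Fin m) (Fin m) ℝ, S₀.PosDef ∧
          (∀ t ∈ Ici t₀, |2 * (∫ ν in t₀..t, (S ν).trace) + S₀.trace| ≤ μ ^ 2) ∧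
          (∀ t ∈ Ici t₀, η ^ 2 ≤ ((2:ℝ) • (∫ ν in t₀..t, S ν) + S₀).det)) := by
  classical
  letI instR : NormedRing (Matrix (Fin m) (Fin m) ℝ) := Matrix.frobeniusNormedRing
  letI instA : NormedAlgebra ℝ (Matrix (Fin m) (Fin m) ℝ) := Matrix.frobeniusNormedAlgebra
  have hu : UniqueDiffOn ℝ (Ici t₀) := uniqueDiffOn_Ici t₀
  constructor
  · rintro ⟨L, hL, ⟨M, hM⟩, ⟨η, hη, hLdet⟩, hLeq⟩
    set D : ℝ → Matrix (Fin m) (Fin m) ℝ := fun t => derivWithin L (Ici t₀) t with hD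
    have hLdiff : DifferentiableOn ℝ L (Ici t₀) := hL.differentiableOn one_ne_zero
    have hLd : ∀ t ∈ Ici t₀, HasDerivWithinAt L (D t) (Ici t₀) t :=
      fun t ht => (hLdiff t ht).hasDerivWithinAt
    have hLcont : ContinuousOn L (Ici t₀) := hL.continuousOn
    have hDcont : ContinuousOn D (Ici t₀) := hL.continuousOn_derivWithin hu le_rfl
    have hLtc : ContinuousOn (fun t => (L t)ᵀ) (Ici t₀) :=
      (Stmt0Aux.transposeCLM m).continuous.comp_continuousOn hLcont
    set E : ℝ → Matrix (Fin m) (Fin m) ℝ := fun t => D t * (L t)ᵀ with hE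
    have hEcont : ContinuousOn E (Ici t₀) := hDcont.mul hLtc
    have hEtc : ContinuousOn (fun t => (E t)ᵀ) (Ici t₀) :=
      (Stmt0Aux.transposeCLM m).continuous.comp_continuousOn hEcont
    have hKeq : ∀ t ∈ Ici t₀, K t = (2⁻¹ : ℝ) • (E t - (E t)ᵀ) := by
      intro t ht
      have h1 : E t = K t + S t := hLeq t ht
      have h2 : (E t)ᵀ = -K t + S t := by rw [h1, Matrix.transpose_add, hK t ht, hS t ht]
      rw [h2, h1]
      module
    have hSeq : ∀ t ∈ Ici t₀, S t = (2⁻¹ : ℝ) • (E t + (E t)ᵀ) := by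
      intro t ht
      have h1 : E t = K t + S t := hLeq t ht
      have h2 : (E t)ᵀ = -K t + S t := by rw [h1, Matrix.transpose_add, hK t ht, hS t ht]
      rw [h2, h1]
      module
    have hKcont : ContinuousOn K (Ici t₀) :=
      ContinuousOn.congr ((hEcont.sub hEtc).const_smul (2⁻¹ : ℝ)) hKeq
    have hScont : ContinuousOn S (Ici t₀) :=
      ContinuousOn.congr ((hEcont.add hEtc).const_smul (2⁻¹ : ℝ)) hSeq
    set P : ℝ → Matrix (Fin m) (Fin m) ℝ := fun t => L t * (L t)ᵀ with hP
    have hPder : ∀ t ∈ Ici t₀, HasDerivWithinAt P ((2:ℝ) • S t) (Ici t₀) t := by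
      intro t ht
      have h1 : HasDerivWithinAt (fun τ => (L τ)ᵀ) ((D t)ᵀ) (Ici t₀) t := by
        have := ((Stmt0Aux.transposeCLM m).hasFDerivAt).comp_hasDerivWithinAt t (hLd t ht)
        exact this
      have h2 := (hLd t ht).mul h1
      have h3 : D t * (L t)ᵀ + L t * (D t)ᵀ = (2:ℝ) • S t := by
        have e1 : D t * (L t)ᵀ = K t + S t := hLeq t ht
        have e2 : L t * (D t)ᵀ = (K t + S t)ᵀ := by
          rw [← e1, Matrix.transpose_mul, Matrix.transpose_transpose]
        rw [e1, e2, Matrix.transpose_add, hK t ht, hS t ht, two_smul]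
        abel
      exact h3 ▸ h2
    have hPcont : ContinuousOn P (Ici t₀) := hLcont.mul hLtc
    have hSint : ∀ t ∈ Ici t₀, @IntervalIntegrable _ _
        NormedAddCommGroup.toENormedAddCommMonoid.toENormedAddMonoid S MeasureTheory.volume t₀ t := by
      intro t ht
      apply ContinuousOn.intervalIntegrable
      rw [uIcc_of_le ht]
      exact hScont.mono Icc_subset_Ici_self
    have key : ∀ t ∈ Ici t₀, (2:ℝ) • (∫ ν in t₀..t, S ν) + L t₀ * (L t₀)ᵀ = P t := by
      intro t ht
      have hFTC : (∫ ν in t₀..t, (2:ℝ) • S ν) = P t - P t₀ := by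
        apply intervalIntegral.integral_eq_sub_of_hasDeriv_right_of_le ht
        · exact hPcont.mono (Icc_subset_Ici_self)
        · intro x hx
          exact (hPder x (le_of_lt hx.1)).mono (fun y hy => le_trans (le_of_lt hx.1) (le_of_lt hy))
        · exact (hSint t ht).smul (2:ℝ)
      have h2 : (∫ ν in t₀..t, (2:ℝ) • S ν) = (2:ℝ) • ∫ ν in t₀..t, S ν :=
        intervalIntegral.integral_smul (2:ℝ) S
      rw [← h2, hFTC]
      rw [hP]
      abel
    have hdet0 : (L t₀).det ≠ 0 := by
      have h1 := hLdet t₀ self_mem_Ici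
      intro h
      rw [h, abs_zero] at h1
      linarith
    have hS₀psd : (L t₀ * (L t₀)ᵀ).PosSemidef := by
      have := Matrix.posSemidef_self_mul_conjTranspose (L t₀)
      rwa [Matrix.conjTranspose_eq_transpose_of_trivial] at this
    have hS₀det : (L t₀ * (L t₀)ᵀ).det = (L t₀).det ^ 2 := by
      rw [Matrix.det_mul, Matrix.det_transpose, sq]
    refine ⟨hKcont, hScont, max M 1, lt_of_lt_of_le one_pos (le_max_right M 1), η, hη,
      L t₀ * (L t₀)ᵀ, ?_, ?_, ?_⟩
    · exact Stmt0Aux.posDef_of_posSemidef_det_ne_zero hS₀psd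
        (by rw [hS₀det]; exact pow_ne_zero 2 hdet0)
    · intro t ht
      have htr1 : (∫ ν in t₀..t, (S ν).trace) = (∫ ν in t₀..t, S ν).trace := by
        have := (Stmt0Aux.traceCLM m).intervalIntegral_comp_comm (hSint t ht)
        exact this
      have htr2 : 2 * (∫ ν in t₀..t, (S ν).trace) + (L t₀ * (L t₀)ᵀ).trace = (P t).trace := by
        have := congrArg Matrix.trace (key t ht)
        rw [Matrix.trace_add, Matrix.trace_smul, smul_eq_mul] at this
        rw [htr1]
        exact this
      have hPtr : (P t).trace = ‖L t‖ ^ 2 := (Stmt0Aux.norm_sq_eq_trace (L t)).symm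
      rw [htr2, hPtr, abs_of_nonneg (by positivity)]
      have h5 : ‖L t‖ ≤ max M 1 := le_trans (hM t ht) (le_max_left M 1)
      exact pow_le_pow_left₀ (norm_nonneg (L t)) h5 2
    · intro t ht
      rw [key t ht]
      have hdP : (P t).det = (L t).det ^ 2 := by
        show (L t * (L t)ᵀ).det = (L t).det ^ 2
        rw [Matrix.det_mul, Matrix.det_transpose, sq]
      rw [hdP, ← sq_abs ((L t).det)]
      exact pow_le_pow_left₀ hη.le (hLdet t ht) 2
  · rintro ⟨hKcont, hScont, μ, hμ, η, hη, S₀, hS₀, htr, hdet⟩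
    set θ : ℝ → ℝ := fun t => max t t₀ with hθ
    have hθc : Continuous θ := continuous_id.max continuous_const
    have hθmem : ∀ t, θ t ∈ Ici t₀ := fun t => le_max_right t t₀
    have hθeq : ∀ t ∈ Ici t₀, θ t = t := fun t ht => max_eq_left ht
    set S' : ℝ → Matrix (Fin m) (Fin m) ℝ := fun t => S (θ t) with hS'
    set K' : ℝ → Matrix (Fin m) (Fin m) ℝ := fun t => K (θ t) with hK'
    have hS'c : Continuous S' := hScont.comp_continuous hθc hθmem
    have hK'c : Continuous K' := hKcont.comp_continuous hθc hθmem
    have hS'sym : ∀ t, (S' t)ᵀ = S' t := fun t => hS (θ t) (hθmem t)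
    have hK'sym : ∀ t, (K' t)ᵀ = -K' t := fun t => hK (θ t) (hθmem t)
    have hS'eqS : ∀ t ∈ Ici t₀, S' t = S t := fun t ht => congrArg S (hθeq t ht)
    have hK'eqK : ∀ t ∈ Ici t₀, K' t = K t := fun t ht => congrArg K (hθeq t ht)
    set P : ℝ → Matrix (Fin m) (Fin m) ℝ := fun t => (2:ℝ) • (∫ ν in t₀..t, S' ν) + S₀ with hP
    have hPint : ∀ t ∈ Ici t₀, (∫ ν in t₀..t, S' ν) = ∫ ν in t₀..t, S ν := by
      intro t ht
      apply intervalIntegral.integral_congr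
      intro ν hν
      rw [uIcc_of_le ht] at hν
      exact hS'eqS ν hν.1
    have hPeq : ∀ t ∈ Ici t₀, P t = (2:ℝ) • (∫ ν in t₀..t, S ν) + S₀ := by
      intro t ht
      show (2:ℝ) • (∫ ν in t₀..t, S' ν) + S₀ = _
      rw [hPint t ht]
    have hPder : ∀ t, HasDerivAt P ((2:ℝ) • S' t) t := by
      intro t
      have h1 : HasDerivAt (fun τ => ∫ ν in t₀..τ, S' ν) (S' t) t :=
        (hS'c.integral_hasStrictDerivAt t₀ t).hasDerivAt
      exact (h1.const_smul (2:ℝ)).add_const S₀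
    have hPcont : Continuous P := continuous_iff_continuousAt.2 fun t => (hPder t).continuousAt
    have hPdet : ∀ t ∈ Ici t₀, η ^ 2 ≤ (P t).det := fun t ht => (hPeq t ht) ▸ hdet t ht
    have hPdetne : ∀ t ∈ Ici t₀, (P t).det ≠ 0 :=
      fun t ht => ne_of_gt (lt_of_lt_of_le (by positivity) (hPdet t ht))
    have hPunit : ∀ t ∈ Ici t₀, IsUnit (P t).det :=
      fun t ht => isUnit_iff_ne_zero.mpr (hPdetne t ht)
    have hS₀sym : S₀ᵀ = S₀ := by
      rw [← Matrix.conjTranspose_eq_transpose_of_trivial]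
      exact hS₀.1
    have hPsym : ∀ t, (P t)ᵀ = P t := by
      intro t
      have h1 : (∫ ν in t₀..t, S' ν)ᵀ = ∫ ν in t₀..t, S' ν := by
        have h2 := (Stmt0Aux.transposeCLM m).intervalIntegral_comp_comm
          (hS'c.intervalIntegrable (μ := MeasureTheory.volume) t₀ t)
        calc (∫ ν in t₀..t, S' ν)ᵀ = ∫ ν in t₀..t, (S' ν)ᵀ := by
              exact h2.symm
          _ = ∫ ν in t₀..t, S' ν := by
              apply intervalIntegral.integral_congr
              intro ν _
              exact hS'sym ν
      show ((2:ℝ) • (∫ ν in t₀..t, S' ν) + S₀)ᵀ = _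
      rw [Matrix.transpose_add, Matrix.transpose_smul, h1, hS₀sym]
    have hP0 : P t₀ = S₀ := by
      show (2:ℝ) • (∫ ν in t₀..t₀, S' ν) + S₀ = S₀
      rw [intervalIntegral.integral_same, smul_zero, zero_add]
    have hPpos : ∀ t ∈ Ici t₀, (P t).PosDef :=
      Stmt0Aux.posDef_on_Ici hm hPcont.continuousOn (hP0 ▸ hS₀) hPdetne (fun t _ => hPsym t)
    set Pi : ℝ → Matrix (Fin m) (Fin m) ℝ := fun t => (P (θ t))⁻¹ with hPi
    have hPic : Continuous Pi := by
      have h1 : Continuous fun t => P (θ t) := hPcont.comp hθc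
      have h2 : Continuous fun t => (P (θ t)).det := h1.matrix_det
      have h3 : ∀ t, (P (θ t)).det ≠ 0 := fun t => hPdetne (θ t) (hθmem t)
      have h5 : Pi = fun t => ((P (θ t)).det)⁻¹ • (P (θ t)).adjugate := by
        funext t
        show (P (θ t))⁻¹ = _
        rw [Matrix.inv_def, Ring.inverse_eq_inv']
      rw [h5]
      exact (h2.inv₀ h3).smul h1.matrix_adjugate
    set A : ℝ → Matrix (Fin m) (Fin m) ℝ := fun t => (K' t + S' t) * Pi t with hA
    have hAc : Continuous A := (hK'c.add hS'c).mul hPic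
    have hPθ : ∀ t ∈ Ici t₀, P (θ t) = P t := fun t ht => by rw [hθeq t ht]
    have hAP : ∀ t ∈ Ici t₀, A t * P t = K' t + S' t := by
      intro t ht
      show (K' t + S' t) * Pi t * P t = _
      rw [mul_assoc]
      show (K' t + S' t) * ((P (θ t))⁻¹ * P t) = _
      rw [hPθ t ht, Matrix.nonsing_inv_mul _ (hPunit t ht), mul_one]
    have hAT : ∀ t ∈ Ici t₀, P t * (A t)ᵀ = S' t - K' t := by
      intro t ht
      have h1 : (A t)ᵀ = (P t)⁻¹ * (S' t - K' t) := by
        show ((K' t + S' t) * Pi t)ᵀ = _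
        rw [Matrix.transpose_mul]
        show ((P (θ t))⁻¹)ᵀ * (K' t + S' t)ᵀ = _
        rw [hPθ t ht, Matrix.transpose_nonsing_inv, hPsym t, Matrix.transpose_add,
          hK'sym t, hS'sym t, neg_add_eq_sub]
      rw [h1, ← mul_assoc, Matrix.mul_nonsing_inv _ (hPunit t ht), one_mul]
    have h2S : ∀ t ∈ Ici t₀, A t * P t + P t * (A t)ᵀ = (2:ℝ) • S' t := by
      intro t ht
      rw [hAP t ht, hAT t ht, two_smul]
      abel
    have hBpsd := hS₀.posSemidef
    obtain ⟨B, hBsym, hBB⟩ := Stmt0Aux.exists_symm_sqrt hBpsd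
    set g₁ : ℝ → (Matrix (Fin m) (Fin m) ℝ →L[ℝ] Matrix (Fin m) (Fin m) ℝ) :=
      fun t => Stmt0Aux.mulLeftCLM (A t) with hg₁
    have hg₁c : Continuous g₁ := Stmt0Aux.continuous_mulLeftCLM.comp hAc
    obtain ⟨L, hL0, hLd⟩ := linear_ode_exists_Ici g₁ hg₁c t₀ B
    have hLd' : ∀ t ∈ Ici t₀, HasDerivWithinAt L (A t * L t) (Ici t₀) t := by
      intro t ht
      exact hLd t ht
    set Q : ℝ → Matrix (Fin m) (Fin m) ℝ := fun t => L t * (L t)ᵀ with hQ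
    have hLtd : ∀ t ∈ Ici t₀, HasDerivWithinAt (fun τ => (L τ)ᵀ) ((A t * L t)ᵀ) (Ici t₀) t := by
      intro t ht
      have := ((Stmt0Aux.transposeCLM m).hasFDerivAt).comp_hasDerivWithinAt t (hLd' t ht)
      exact this
    have hQd : ∀ t ∈ Ici t₀, HasDerivWithinAt Q (A t * Q t + Q t * (A t)ᵀ) (Ici t₀) t := by
      intro t ht
      have h2 := (hLd' t ht).mul (hLtd t ht)
      have h3 : A t * L t * (L t)ᵀ + L t * (A t * L t)ᵀ
          = A t * Q t + Q t * (A t)ᵀ := by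
        show A t * L t * (L t)ᵀ + L t * (A t * L t)ᵀ
            = A t * (L t * (L t)ᵀ) + (L t * (L t)ᵀ) * (A t)ᵀ
        rw [Matrix.transpose_mul]
        noncomm_ring
      exact h3 ▸ h2
    have hPd' : ∀ t ∈ Ici t₀, HasDerivWithinAt P (A t * P t + P t * (A t)ᵀ) (Ici t₀) t := by
      intro t ht
      have := (hPder t).hasDerivWithinAt (s := Ici t₀)
      rwa [← h2S t ht] at this
    set g₂ : ℝ → (Matrix (Fin m) (Fin m) ℝ →L[ℝ] Matrix (Fin m) (Fin m) ℝ) :=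
      fun t => Stmt0Aux.mulLeftCLM (A t) + Stmt0Aux.mulRightCLM ((A t)ᵀ) with hg₂
    have hg₂c : Continuous g₂ := by
      apply Continuous.add
      · exact Stmt0Aux.continuous_mulLeftCLM.comp hAc
      · exact Stmt0Aux.continuous_mulRightCLM.comp ((Stmt0Aux.transposeCLM m).continuous.comp hAc)
    have hQP : ∀ t ∈ Ici t₀, Q t = P t := by
      apply linear_ode_unique_Ici g₂ hg₂c t₀
      · intro t ht
        have := hQd t ht
        exact this
      · intro t ht
        have := hPd' t ht
        exact this
      · show L t₀ * (L t₀)ᵀ = P t₀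
        rw [hL0, hBsym, hBB, hP0]
    have hderivW : ∀ t ∈ Ici t₀, derivWithin L (Ici t₀) t = A t * L t :=
      fun t ht => (hLd' t ht).derivWithin (hu t ht)
    have hLcont : ContinuousOn L (Ici t₀) :=
      fun t ht => ((hLd' t ht).continuousWithinAt)
    refine ⟨L, ?_, ⟨μ, ?_⟩, ⟨η, hη, ?_⟩, ?_⟩
    · rw [show (1 : WithTop ℕ∞) = 0 + 1 from (zero_add 1).symm,
        contDiffOn_succ_iff_derivWithin hu]
      refine ⟨fun t ht => (hLd' t ht).differentiableWithinAt, ?_, ?_⟩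
      · intro h
        simp at h
      · rw [contDiffOn_zero]
        apply ContinuousOn.congr (hAc.continuousOn.mul hLcont) hderivW
    · intro t ht
      have h1 : ‖L t‖ ^ 2 = (P t).trace := by
        rw [Stmt0Aux.norm_sq_eq_trace]
        exact congrArg Matrix.trace (hQP t ht)
      have h2 : (P t).trace = 2 * (∫ ν in t₀..t, (S ν).trace) + S₀.trace := by
        rw [hPeq t ht]
        have hSint : @IntervalIntegrable _ _
            NormedAddCommGroup.toENormedAddCommMonoid.toENormedAddMonoid S MeasureTheory.volume t₀ t := by
          apply ContinuousOn.intervalIntegrable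
          rw [uIcc_of_le ht]
          exact hScont.mono Icc_subset_Ici_self
        have h3 := (Stmt0Aux.traceCLM m).intervalIntegral_comp_comm hSint
        change (∫ ν in t₀..t, (S ν).trace) = (∫ ν in t₀..t, S ν).trace at h3
        rw [Matrix.trace_add, Matrix.trace_smul, smul_eq_mul, ← h3]
      have h4 : ‖L t‖ ^ 2 ≤ μ ^ 2 := by
        rw [h1, h2]
        exact le_trans (le_abs_self _) (htr t ht)
      nlinarith [norm_nonneg (L t)]
    · intro t ht
      have hdQ : (L t).det ^ 2 = (P t).det := by
        have h7 : (Q t).det = (P t).det := congrArg Matrix.det (hQP t ht)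
        have h8 : (Q t).det = (L t).det ^ 2 := by
          show (L t * (L t)ᵀ).det = _
          rw [Matrix.det_mul, Matrix.det_transpose, sq]
        rw [← h8, h7]
      have h5 : η ^ 2 ≤ (L t).det ^ 2 := by
        rw [hdQ]
        exact hPdet t ht
      nlinarith [abs_nonneg ((L t).det), le_abs_self ((L t).det), neg_abs_le ((L t).det)]
    · intro t ht
      rw [hderivW t ht, mul_assoc]
      have h6 : L t * (L t)ᵀ = P t := hQP t ht
      rw [h6, hAP t ht, hK'eqK t ht, hS'eqS t ht]
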